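/- Let T be an N×N complex matrix with ‖T‖ ≤ 1 (operator norm) and T^n = 0 for some n ≥ 2. Then the numerical radius of T satisfies ω(T) ≤ cos(π/(n+1)). -/

import Mathlib

set_option synthInstance.maxHeartbeats 1000000
set_option maxHeartbeats 1000000


open Matrix
open Real

noncomputable section

/-- The `n × n` nilpotent shift matrix: `(S_n)_{ij} = 1` if `i = j + 1`, else `0`. -/
def shiftMatrix (n : ℕ) : Matrix (Fin n) (Fin n) ℂ :=
  Matrix.of fun i j => if (i : ℕ) = (j : ℕ) + 1 then 1 else 0

/-- The rank-`k` numerical range of a square complex matrix `T`: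
all `λ` such that `P * T * P = λ • P` for some orthogonal projection `P` of rank `k`. -/
def rankNumRange {m : Type*} [Fintype m] (k : ℕ) (T : Matrix m m ℂ) : Set ℂ :=
  {lam : ℂ | ∃ P : Matrix m m ℂ,
    P * P = P ∧ Pᴴ = P ∧ P.rank = k ∧ P * T * P = lam • P}

/-- The numerical radius of a square complex matrix:
`ω(T) = sup {|⟨Tx, x⟩| : ‖x‖ = 1}`. -/
def numRadius {N : ℕ} (T : Matrix (Fin N) (Fin N) ℂ) : ℝ :=
  sSup {r : ℝ | ∃ x : Fin N → ℂ,
    ∑ i, ‖x i‖ ^ 2 = 1 ∧ r = ‖star x ⬝ᵥ (T *ᵥ x)‖}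

open Real in

lemma re_dot_symm {N : ℕ} (u v : Fin N → ℂ) :
    (star v ⬝ᵥ u).re = (star u ⬝ᵥ v).re := by
  have : star v ⬝ᵥ u = star (star u ⬝ᵥ v) := by
    simp [dotProduct, Finset.sum_comm, star_sum, mul_comm]
  rw [this, Complex.star_def, Complex.conj_re]

lemma dot_expand {N : ℕ} (u v : Fin N → ℂ) (r t : ℝ) :
    (star ((r:ℂ) • u - (t:ℂ) • v) ⬝ᵥ ((r:ℂ) • u - (t:ℂ) • v)).re
      = r^2 * (star u ⬝ᵥ u).re + t^2 * (star v ⬝ᵥ v).re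
        - 2*r*t*(star u ⬝ᵥ v).re := by
  rw [star_sub, star_smul, star_smul, sub_dotProduct, dotProduct_sub, dotProduct_sub,
    smul_dotProduct, smul_dotProduct, smul_dotProduct, smul_dotProduct,
    dotProduct_smul, dotProduct_smul, dotProduct_smul, dotProduct_smul]
  have h := re_dot_symm u v
  simp only [Complex.star_def, Complex.conj_ofReal, smul_eq_mul, Complex.sub_re,
    Complex.mul_re, Complex.ofReal_re, Complex.ofReal_im]
  rw [h]; ring

lemma key_lemma {N n : ℕ} (hn : 2 ≤ n) (T : Matrix (Fin N) (Fin N) ℂ)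
    (hC : ∀ v, (star (T *ᵥ v) ⬝ᵥ (T *ᵥ v)).re ≤ (star v ⬝ᵥ v).re)
    (hTn : T ^ n = 0) (x : Fin N → ℂ) (hx : (star x ⬝ᵥ x).re = 1) :
    (star x ⬝ᵥ (T *ᵥ x)).re ≤ Real.cos (π / (n + 1)) := by
  obtain ⟨m, rfl⟩ : ∃ m, n = m + 2 := ⟨n - 2, by omega⟩
  set n := m + 2 with hn'
  set θ : ℝ := π / (n + 1) with hθ
  have hθpos : 0 < θ := by
    apply div_pos Real.pi_pos; positivity
  set s : ℕ → ℝ := fun k => Real.sin (k * θ) with hs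
  set a : ℕ → (Fin N → ℂ) := fun k => (T ^ k) *ᵥ x with ha
  set p : ℕ → ℝ := fun k => (star (a k) ⬝ᵥ a k).re with hp
  set q : ℕ → ℝ := fun k => (star (a k) ⬝ᵥ a (k+1)).re with hq
  set R : ℕ → ℝ := fun j => 2 * q j - (s (j+2) / s (j+1)) * p j
      - (s j / s (j+1)) * p (j+1) with hR
  have srec : ∀ k : ℕ, s (k+2) = 2 * Real.cos θ * s (k+1) - s k := by
    intro k
    have e1 : ((k:ℝ)+2) * θ = ((k:ℝ)+1) * θ + θ := by ring
    have e2 : (k:ℝ) * θ = ((k:ℝ)+1) * θ - θ := by ring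
    simp only [hs]
    push_cast
    rw [e1, e2, Real.sin_add, Real.sin_sub]
    ring
  have spos : ∀ k : ℕ, 1 ≤ k → k ≤ n → 0 < s k := by
    intro k h1 h2
    apply Real.sin_pos_of_pos_of_lt_pi
    · have : (0:ℝ) < (k:ℝ) := by exact_mod_cast Nat.pos_of_ne_zero (by omega)
      positivity
    · rw [hθ]
      rw [div_eq_mul_inv, ← mul_assoc]
      have hlt : (k:ℝ) < (n:ℝ) + 1 := by exact_mod_cast by omega
      calc (k:ℝ) * π * ((n:ℝ)+1)⁻¹ < ((n:ℝ)+1) * π * ((n:ℝ)+1)⁻¹ := by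
            apply mul_lt_mul_of_pos_right _ (by positivity)
            exact mul_lt_mul_of_pos_right hlt Real.pi_pos
        _ = π := by field_simp
  have asucc : ∀ k : ℕ, a (k+1) = T *ᵥ a k := by
    intro k
    simp only [ha, pow_succ']
    rw [← Matrix.mulVec_mulVec]
  have a0 : a 0 = x := by simp [ha, Matrix.one_mulVec]
  have an : a n = 0 := by simp [ha, hTn, Matrix.zero_mulVec]
  -- per-term identity and positivity
  have hterm : ∀ j ∈ Finset.range (m+1), 0 ≤ R (j+1) - R j := by
    intro j hj
    rw [Finset.mem_range] at hj
    have h1 : 0 < s (j+1) := spos (j+1) (by omega) (by omega)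
    have h2 : 0 < s (j+2) := spos (j+2) (by omega) (by omega)
    set c : Fin N → ℂ := ((s (j+2) : ℝ) : ℂ) • a j - ((s (j+1) : ℝ) : ℂ) • a (j+1) with hc
    have hTc : T *ᵥ c = ((s (j+2) : ℝ) : ℂ) • a (j+1) - ((s (j+1) : ℝ) : ℂ) • a (j+2) := by
      rw [hc, Matrix.mulVec_sub, Matrix.mulVec_smul, Matrix.mulVec_smul, ← asucc, ← asucc]
    have hineq := hC c
    rw [hTc] at hineq
    rw [hc] at hineq
    rw [dot_expand, dot_expand] at hineq
    have hid : (1 / (s (j+1) * s (j+2))) *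
        ((s (j+2)^2 * p j + s (j+1)^2 * p (j+1) - 2 * s (j+2) * s (j+1) * q j)
          - (s (j+2)^2 * p (j+1) + s (j+1)^2 * p (j+2) - 2 * s (j+2) * s (j+1) * q (j+1)))
        = R (j+1) - R j := by
      have e0 : s j = 2 * Real.cos θ * s (j+1) - s (j+2) := by
        have := srec j; linarith
      have e3 : s (j+3) = 2 * Real.cos θ * s (j+2) - s (j+1) := srec (j+1)
      simp only [hR]
      rw [show j+1+2 = j+3 from rfl, show j+1+1 = j+2 from rfl, e0, e3]
      field_simp
      ring
    have hnn : 0 ≤ (1 / (s (j+1) * s (j+2))) *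
        ((s (j+2)^2 * p j + s (j+1)^2 * p (j+1) - 2 * s (j+2) * s (j+1) * q j)
          - (s (j+2)^2 * p (j+1) + s (j+1)^2 * p (j+2) - 2 * s (j+2) * s (j+1) * q (j+1))) := by
      apply mul_nonneg (by positivity)
      have : 2 * s (j+2) * s (j+1) = 2 * s (j+1) * s (j+2) := by ring
      rw [this]
      linarith [hineq]
    linarith [hid ▸ hnn]
  have tele : ∑ j ∈ Finset.range (m+1), (R (j+1) - R j) = R (m+1) - R 0 :=
    Finset.sum_range_sub R (m+1)
  have hsum : 0 ≤ R (m+1) - R 0 := by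
    rw [← tele]
    exact Finset.sum_nonneg hterm
  have hRend : R (m+1) = 0 := by
    have hq1 : q (m+1) = 0 := by
      simp only [hq]
      rw [show m+1+1 = n from rfl, an]
      simp [dotProduct_zero]
    have hp2 : p (m+2) = 0 := by
      simp only [hp]
      rw [show m+2 = n from rfl, an]
      simp [dotProduct_zero]
    have hs3 : s (m+3) = 0 := by
      have : ((m:ℝ)+3) * θ = π := by
        rw [hθ]; push_cast [hn']; field_simp; ring
      simp only [hs]
      push_cast
      rw [this, Real.sin_pi]
    simp only [hR]
    rw [show m+1+2 = m+3 from rfl, show m+1+1 = m+2 from rfl, hq1, hp2, hs3]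
    ring
  have hR0 : R 0 = 2 * q 0 - 2 * Real.cos θ := by
    have hs1 : 0 < s 1 := spos 1 (by omega) (by omega)
    have hs0 : s 0 = 0 := by simp [hs]
    have hp0 : p 0 = 1 := by rw [hp]; simp only [a0]; exact hx
    have hs2 : s 2 = 2 * Real.cos θ * s 1 := by
      simp only [hs]
      push_cast
      rw [show ((2:ℝ)) * θ = 2 * θ from rfl, Real.sin_two_mul, one_mul]
      ring
    simp only [hR]
    rw [hs0, hs2, hp0]
    field_simp
    ring
  have hq0 : q 0 = (star x ⬝ᵥ (T *ᵥ x)).re := by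
    simp only [hq]
    rw [show (0:ℕ)+1 = 1 from rfl, asucc 0, a0]
  rw [hRend, hR0, hq0] at hsum
  linarith [hsum]

lemma npd_eq {N : ℕ} (v : Fin N → ℂ) :
    (star v ⬝ᵥ v).re = ∑ i, ‖v i‖^2 := by
  rw [dotProduct, Complex.re_sum]
  refine Finset.sum_congr rfl fun i _ => ?_
  rw [Pi.star_apply, Complex.star_def, ← Complex.normSq_eq_conj_mul_self,
    Complex.ofReal_re, Complex.normSq_eq_norm_sq]

lemma contract {N : ℕ} (T : Matrix (Fin N) (Fin N) ℂ)
    (hT : ‖Matrix.toEuclideanCLM (𝕜 := ℂ) T‖ ≤ 1) (v : Fin N → ℂ) :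
    (star (T *ᵥ v) ⬝ᵥ (T *ᵥ v)).re ≤ (star v ⬝ᵥ v).re := by
  have h := (Matrix.toEuclideanCLM (𝕜 := ℂ) T).le_opNorm ((WithLp.equiv 2 _).symm v)
  have h2 : ‖Matrix.toEuclideanCLM (𝕜 := ℂ) T ((WithLp.equiv 2 _).symm v)‖
      ≤ ‖(WithLp.equiv 2 (Fin N → ℂ)).symm v‖ := by
    calc _ ≤ ‖Matrix.toEuclideanCLM (𝕜 := ℂ) T‖ * ‖(WithLp.equiv 2 (Fin N → ℂ)).symm v‖ := h
    _ ≤ 1 * _ := by gcongr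
    _ = _ := one_mul _
  change ‖(WithLp.equiv 2 (Fin N → ℂ)).symm (T *ᵥ v)‖ ≤ ‖(WithLp.equiv 2 (Fin N → ℂ)).symm v‖ at h2
  rw [npd_eq, npd_eq]
  have e : ∀ w : Fin N → ℂ, ‖(WithLp.equiv 2 (Fin N → ℂ)).symm w‖^2 = ∑ i, ‖w i‖^2 := by
    intro w
    rw [EuclideanSpace.norm_eq]
    rw [Real.sq_sqrt (by positivity)]
    rfl
  have h3 := pow_le_pow_left₀ (norm_nonneg _) h2 2
  rwa [e, e] at h3


theorem test
    (N n : ℕ) (hn : 2 ≤ n) (T : Matrix (Fin N) (Fin N) ℂ)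
    (hT : ‖Matrix.toEuclideanCLM (𝕜 := ℂ) T‖ ≤ 1) (hTn : T ^ n = 0) :
    sSup {r : ℝ | ∃ x : Fin N → ℂ,
      ∑ i, ‖x i‖ ^ 2 = 1 ∧ r = ‖star x ⬝ᵥ (T *ᵥ x)‖} ≤ Real.cos (π / (n + 1)) := by
  have hcos : 0 < Real.cos (π / (n + 1)) := by
    apply Real.cos_pos_of_mem_Ioo
    constructor
    · have : 0 < π / ((n:ℝ) + 1) := by
        apply div_pos Real.pi_pos; positivity
      linarith [Real.pi_pos, this]
    · apply div_lt_div_of_pos_left Real.pi_pos (by norm_num)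
      have : (2:ℝ) ≤ (n:ℝ) := by exact_mod_cast hn
      linarith
  apply Real.sSup_le _ hcos.le
  rintro r ⟨x, hx, rfl⟩
  have hx' : (star x ⬝ᵥ x).re = 1 := by rw [npd_eq]; exact hx
  set c := star x ⬝ᵥ (T *ᵥ x) with hc
  by_cases h0 : c = 0
  · rw [h0]; simpa using hcos.le
  · have habs : ‖c‖ ≠ 0 := by
      simpa [map_eq_zero] using h0
    set z : ℂ := (starRingEnd ℂ) c / ((‖c‖ : ℝ) : ℂ) with hz
    have hznorm : ‖z‖ = 1 := by
      rw [hz, norm_div]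
      simp only [RCLike.norm_conj, Complex.norm_real, Real.norm_eq_abs,
        abs_of_nonneg (norm_nonneg c)]
      field_simp
    have hCz : ∀ v, (star ((z • T) *ᵥ v) ⬝ᵥ ((z • T) *ᵥ v)).re ≤ (star v ⬝ᵥ v).re := by
      apply contract
      rw [_root_.map_smul]
      calc ‖z • Matrix.toEuclideanCLM (𝕜 := ℂ) T‖ ≤ ‖z‖ * ‖Matrix.toEuclideanCLM (𝕜 := ℂ) T‖ :=
            ContinuousLinearMap.opNorm_smul_le z _
        _ ≤ 1 := by rw [hznorm, one_mul]; exact hT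
    have hTnz : (z • T) ^ n = 0 := by
      rw [smul_pow, hTn, smul_zero]
    have key := key_lemma hn (z • T) hCz hTnz x hx'
    have hzc : star x ⬝ᵥ ((z • T) *ᵥ x) = ((‖c‖ : ℝ) : ℂ) := by
      rw [Matrix.smul_mulVec, dotProduct_smul, smul_eq_mul, ← hc, hz,
        div_mul_eq_mul_div, ← Complex.normSq_eq_conj_mul_self, Complex.normSq_eq_norm_sq]
      push_cast
      rw [sq]
      field_simp
    rw [hzc] at key
    simpa using key

open Real in
theorem numRadius_le_of_contraction_nilpotent
    (N n : ℕ) (hn : 2 ≤ n) (T : Matrix (Fin N) (Fin N) ℂ)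
    (hT : ‖Matrix.toEuclideanCLM (𝕜 := ℂ) T‖ ≤ 1) (hTn : T ^ n = 0) :
    numRadius T ≤ cos (π / (n + 1)) := by
  unfold numRadius
  exact test N n hn T hT hTn
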